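/- If a polyhedron K embeds piecewise-linearly into ℝ^d with d > 0, then K × S¹ embeds piecewise-linearly into ℝ^{d+1}. -/

import Mathlib

open Set

noncomputable section

/-- The point of `ℝ^V` corresponding to a vertex `v` of a graph. -/
def vert {V : Type*} [DecidableEq V] (v : V) : V → ℝ := fun i => if i = v then 1 else 0

/-- Geometric realization of a simple graph as a subset of `ℝ^V`:
the union of the straight segments joining the standard points of adjacent vertices. -/
def graphRealization {V : Type*} [DecidableEq V] (G : SimpleGraph V) : Set (V → ℝ) :=
  ⋃ p : {p : V × V // G.Adj p.1 p.2}, segment ℝ (vert p.1.1) (vert p.1.2)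

/-- A (compact) polyhedron: a finite union of polytopes (convex hulls of finite sets). -/
def IsPolyhedron {E : Type*} [AddCommGroup E] [Module ℝ E] (s : Set E) : Prop :=
  ∃ T : Set (Set E), T.Finite ∧ (∀ P ∈ T, ∃ Q : Set E, Q.Finite ∧ P = convexHull ℝ Q) ∧
    s = ⋃₀ T

/-- `f` is piecewise linear (PL) on `s`: there is a finite family of polytopes covering `s`
on each of which `f` coincides with an affine map. -/
def IsPLOn {E F : Type*} [AddCommGroup E] [Module ℝ E] [AddCommGroup F] [Module ℝ F]
    (f : E → F) (s : Set E) : Prop :=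
  ∃ T : Set (Set E), T.Finite ∧ (∀ P ∈ T, ∃ Q : Set E, Q.Finite ∧ P = convexHull ℝ Q) ∧
    s ⊆ ⋃₀ T ∧ ∀ P ∈ T, ∃ g : E →ᵃ[ℝ] F, EqOn f g (P ∩ s)

/-- The cone over a set `A` with apex `p` (union of segments from `p` to points of `A`). -/
def coneFrom {E : Type*} [AddCommGroup E] [Module ℝ E] (p : E) (A : Set E) : Set E :=
  ⋃ x ∈ A, segment ℝ p x

/-- A PL circle: the boundary of the unit square in `ℝ²`. -/
def plCircle : Set (ℝ × ℝ) := {y | |y.1| ⊔ |y.2| = 1}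


section Halfspace
variable {E : Type*} [AddCommGroup E] [Module ℝ E]

/-- The point on the segment `[a,b]` where the linear functional `ℓ` takes value `c`. -/
noncomputable def crossPt (ℓ : E →ₗ[ℝ] ℝ) (c : ℝ) (a b : E) : E :=
  a + ((c - ℓ a) / (ℓ b - ℓ a)) • (b - a)

lemma crossPt_combo (ℓ : E →ₗ[ℝ] ℝ) (c : ℝ) (a b : E) :
    crossPt ℓ c a b = (1 - (c - ℓ a) / (ℓ b - ℓ a)) • a + ((c - ℓ a) / (ℓ b - ℓ a)) • b := by
  simp only [crossPt, smul_sub, sub_smul, one_smul]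
  abel

lemma crossPt_mem_segment {ℓ : E →ₗ[ℝ] ℝ} {c : ℝ} {a b : E} (ha : ℓ a ≤ c) (hb : c < ℓ b) :
    crossPt ℓ c a b ∈ segment ℝ a b := by
  rw [crossPt_combo]
  have h1 : (0:ℝ) < ℓ b - ℓ a := by linarith
  have h2 : (0:ℝ) ≤ (c - ℓ a) / (ℓ b - ℓ a) := div_nonneg (by linarith) h1.le
  have h3 : (c - ℓ a) / (ℓ b - ℓ a) ≤ 1 := by
    rw [div_le_one h1]; linarith
  exact ⟨_, _, by linarith, h2, by ring, rfl⟩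

lemma ell_crossPt {ℓ : E →ₗ[ℝ] ℝ} {c : ℝ} {a b : E} (ha : ℓ a ≤ c) (hb : c < ℓ b) :
    ℓ (crossPt ℓ c a b) = c := by
  have h1 : ℓ b - ℓ a ≠ 0 := sub_ne_zero.2 (ne_of_gt (by linarith))
  simp only [crossPt, map_add, map_smul, smul_eq_mul, map_sub]
  field_simp
  ring

theorem hull_inter_halfspace (Q : Finset E) (ℓ : E →ₗ[ℝ] ℝ) (c : ℝ) :
    ∃ Q' : Set E, Q'.Finite ∧
      convexHull ℝ (Q : Set E) ∩ {x | ℓ x ≤ c} = convexHull ℝ Q' := by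
  classical
  set Fm : Finset E := Q.filter (fun q => ℓ q ≤ c) with hFm
  set Fp : Finset E := Q.filter (fun q => ¬ ℓ q ≤ c) with hFp
  set Q' : Set E := (Fm : Set E) ∪
      (fun p : E × E => crossPt ℓ c p.1 p.2) ''
        {p : E × E | p.1 ∈ Fm ∧ p.2 ∈ Fp} with hQ'
  have hQ'fin : Q'.Finite := by
    apply Set.Finite.union (Fm.finite_toSet)
    apply Set.Finite.image
    exact (Fm.finite_toSet.prod Fp.finite_toSet).subset (fun p hp => ⟨hp.1, hp.2⟩)
  have hFmQ : ∀ q ∈ Fm, ℓ q ≤ c := fun q hq => (Finset.mem_filter.1 hq).2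
  have hFpQ : ∀ q ∈ Fp, c < ℓ q := fun q hq => lt_of_not_ge (Finset.mem_filter.1 hq).2
  have hQ'sub : Q' ⊆ convexHull ℝ (Q : Set E) ∩ {x | ℓ x ≤ c} := by
    rintro x (hx | ⟨⟨a, b⟩, ⟨ha, hb⟩, rfl⟩)
    · exact ⟨subset_convexHull ℝ _ (Finset.mem_coe.2 (Finset.filter_subset _ _ hx)),
        hFmQ _ hx⟩
    · refine ⟨?_, le_of_eq (ell_crossPt (hFmQ a ha) (hFpQ b hb))⟩
      have hmem := crossPt_mem_segment (hFmQ a ha) (hFpQ b hb)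
      exact (convex_convexHull ℝ _).segment_subset
        (subset_convexHull ℝ _ (Finset.filter_subset _ _ ha))
        (subset_convexHull ℝ _ (Finset.filter_subset _ _ hb)) hmem
  refine ⟨Q', hQ'fin, Subset.antisymm ?_
    (convexHull_min hQ'sub ((convex_convexHull ℝ _).inter
      (convex_halfSpace_le ℓ.isLinear c)))⟩
  rintro x ⟨hxQ, hxc⟩
  rw [Finset.convexHull_eq] at hxQ
  obtain ⟨w, hw0, hw1, hwx⟩ := hxQ
  rw [Finset.centerMass_eq_of_sum_1 _ _ hw1] at hwx
  simp only [id] at hwx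
  have hℓx : ℓ x ≤ c := hxc
  set α : ℝ := ∑ y ∈ Fm, w y with hα
  set β : ℝ := ∑ y ∈ Fp, w y with hβ
  have hαβ : α + β = 1 := by
    rw [hα, hβ, Finset.sum_filter_add_sum_filter_not, hw1]
  have hα0 : 0 ≤ α := Finset.sum_nonneg (fun y hy => hw0 y (Finset.filter_subset _ _ hy))
  have hβ0 : 0 ≤ β := Finset.sum_nonneg (fun y hy => hw0 y (Finset.filter_subset _ _ hy))
  have hxsplit : x = (∑ y ∈ Fm, w y • y) + (∑ y ∈ Fp, w y • y) := by
    rw [← hwx, ← Finset.sum_filter_add_sum_filter_not Q (fun q => ℓ q ≤ c)]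
  have hSm : ℓ (∑ y ∈ Fm, w y • y) = ∑ y ∈ Fm, w y * ℓ y := by
    rw [map_sum]; exact Finset.sum_congr rfl (fun y _ => by rw [map_smul, smul_eq_mul])
  have hSp : ℓ (∑ y ∈ Fp, w y • y) = ∑ y ∈ Fp, w y * ℓ y := by
    rw [map_sum]; exact Finset.sum_congr rfl (fun y _ => by rw [map_smul, smul_eq_mul])
  by_cases hβz : β = 0
  · -- all the mass is on the ≤ side
    have hwz : ∀ y ∈ Fp, w y = 0 := by
      rw [← Finset.sum_eq_zero_iff_of_nonneg
        (fun y hy => hw0 y (Finset.filter_subset _ _ hy))]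
      exact hβz
    have hx2 : x = ∑ y ∈ Fm, w y • y := by
      have h0 : (∑ y ∈ Fp, w y • y) = 0 :=
        Finset.sum_eq_zero (fun y hy => by rw [hwz y hy, zero_smul])
      rw [hxsplit, h0, add_zero]
    have hα1 : α = 1 := by rw [← hαβ, hβz, add_zero]
    have := Finset.centerMass_mem_convexHull (s := Q') Fm
      (fun y hy => hw0 y (Finset.filter_subset _ _ hy)) (by rw [← hα, hα1]; norm_num)
      (z := id) (fun y hy => Or.inl (Finset.mem_coe.2 hy))
    rw [Finset.centerMass_eq_of_sum_1 _ _ (by rw [← hα, hα1])] at this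
    simp only [id_eq] at this
    rwa [← hx2] at this
  · have hβpos : 0 < β := lt_of_le_of_ne hβ0 (Ne.symm hβz)
    -- the strict bound on the positive part
    have hSpgt : c * β < ∑ y ∈ Fp, w y * ℓ y := by
      have hne : ∃ y ∈ Fp, 0 < w y := by
        by_contra hcon
        push_neg at hcon
        have : β = 0 := Finset.sum_eq_zero (fun y hy =>
          le_antisymm (hcon y hy) (hw0 y (Finset.filter_subset _ _ hy)))
        exact hβz this
      obtain ⟨y₀, hy₀, hwy₀⟩ := hne
      have : ∑ y ∈ Fp, w y * c < ∑ y ∈ Fp, w y * ℓ y := by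
        apply Finset.sum_lt_sum
        · intro y hy
          exact mul_le_mul_of_nonneg_left (hFpQ y hy).le (hw0 y (Finset.filter_subset _ _ hy))
        · exact ⟨y₀, hy₀, by nlinarith [hFpQ y₀ hy₀]⟩
      calc c * β = ∑ y ∈ Fp, w y * c := by
            rw [hβ, Finset.mul_sum]
            exact Finset.sum_congr rfl (fun y _ => mul_comm _ _)
        _ < _ := this
    have hSmle : ∑ y ∈ Fm, w y * ℓ y ≤ c * α := by
      calc ∑ y ∈ Fm, w y * ℓ y ≤ ∑ y ∈ Fm, w y * c := by
            apply Finset.sum_le_sum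
            intro y hy
            exact mul_le_mul_of_nonneg_left (hFmQ y hy) (hw0 y (Finset.filter_subset _ _ hy))
        _ = c * α := by rw [hα, Finset.mul_sum]; exact Finset.sum_congr rfl (fun y _ => mul_comm _ _)
    have hℓsum : (∑ y ∈ Fm, w y * ℓ y) + (∑ y ∈ Fp, w y * ℓ y) ≤ c := by
      rw [← hSm, ← hSp, ← map_add, ← hxsplit]; exact hℓx
    have hSmlt : ∑ y ∈ Fm, w y * ℓ y < c * α := by
      have hc : c * α + c * β = c := by rw [← mul_add, hαβ, mul_one]
      linarith
    have hαpos : 0 < α := by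
      rcases lt_or_eq_of_le hα0 with h | h
      · exact h
      · exfalso
        have hwz : ∀ y ∈ Fm, w y = 0 := by
          rw [← Finset.sum_eq_zero_iff_of_nonneg
            (fun y hy => hw0 y (Finset.filter_subset _ _ hy))]
          exact h.symm
        have : ∑ y ∈ Fm, w y * ℓ y = 0 :=
          Finset.sum_eq_zero (fun y hy => by rw [hwz y hy, zero_mul])
        rw [this, ← h, mul_zero] at hSmlt
        exact lt_irrefl _ hSmlt
    set u : E := α⁻¹ • ∑ y ∈ Fm, w y • y with hu
    clear_value u
    have hαu : α • u = ∑ y ∈ Fm, w y • y := by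
      rw [hu, smul_smul, mul_inv_cancel₀ (ne_of_gt hαpos), one_smul]
    have hℓu : ℓ u < c := by
      have : ℓ u = α⁻¹ * ∑ y ∈ Fm, w y * ℓ y := by rw [hu, map_smul, smul_eq_mul, hSm]
      rw [this]
      rw [inv_mul_lt_iff₀ hαpos]; linarith [hSmlt]
    have humem : u ∈ convexHull ℝ Q' := by
      have := Finset.centerMass_mem_convexHull (s := Q') Fm
        (fun y hy => hw0 y (Finset.filter_subset _ _ hy)) (by rw [← hα]; exact hαpos)
        (z := id) (fun y hy => Or.inl (Finset.mem_coe.2 hy))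
      rw [Finset.centerMass] at this
      simp only [id_eq] at this
      rw [hu]
      rwa [← hα] at this
    have hcu : 0 < c - ℓ u := by linarith
    have hαℓu : α * ℓ u = ∑ q ∈ Fm, w q * ℓ q := by
      have := congrArg ℓ hαu
      rwa [map_smul, smul_eq_mul, hSm] at this
    -- crossing points from u towards each positive vertex lie in the hull of Q'
    have hm_mem : ∀ y ∈ Fp, crossPt ℓ c u y ∈ convexHull ℝ Q' := by
      intro y hy
      have hyc : c < ℓ y := hFpQ y hy
      have hyu : (0:ℝ) < ℓ y - ℓ u := by linarith
      set coef : E → ℝ := fun q => α⁻¹ * (w q * (ℓ y - ℓ q) / (ℓ y - ℓ u)) with hcoef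
      have hcoef0 : ∀ q ∈ Fm, 0 ≤ coef q := by
        intro q hq
        have h1 : ℓ q ≤ c := hFmQ q hq
        have h0 := hw0 q (Finset.filter_subset _ _ hq)
        have h2 : (0:ℝ) ≤ w q * (ℓ y - ℓ q) := by nlinarith
        have h3 : (0:ℝ) ≤ α⁻¹ := inv_nonneg.2 hα0
        have h4 : (0:ℝ) ≤ w q * (ℓ y - ℓ q) / (ℓ y - ℓ u) := div_nonneg h2 hyu.le
        exact mul_nonneg h3 h4
      have hsum1 : ∑ q ∈ Fm, w q * (ℓ y - ℓ q) = α * (ℓ y - ℓ u) := by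
        have e : ∑ q ∈ Fm, w q * (ℓ y - ℓ q)
            = (∑ q ∈ Fm, w q) * ℓ y - ∑ q ∈ Fm, w q * ℓ q := by
          rw [Finset.sum_mul, ← Finset.sum_sub_distrib]
          exact Finset.sum_congr rfl (fun q _ => by ring)
        rw [e, ← hα, ← hαℓu]; ring
      have hsumcoef : ∑ q ∈ Fm, coef q = 1 := by
        have e : ∑ q ∈ Fm, coef q
            = α⁻¹ * ((∑ q ∈ Fm, w q * (ℓ y - ℓ q)) / (ℓ y - ℓ u)) := by
          rw [Finset.sum_div, ← Finset.mul_sum]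
        rw [e, hsum1, mul_div_assoc, div_self (ne_of_gt hyu), mul_one,
          inv_mul_cancel₀ (ne_of_gt hαpos)]
      -- the combination of pairwise crossing points equals the crossing point from u
      have hcomb : ∑ q ∈ Fm, coef q • crossPt ℓ c q y = crossPt ℓ c u y := by
        have hterm : ∀ q ∈ Fm, coef q • crossPt ℓ c q y
            = (α⁻¹ * w q * ((ℓ y - c) / (ℓ y - ℓ u))) • q
              + (α⁻¹ * (w q * (c - ℓ q) / (ℓ y - ℓ u))) • y := by
          intro q hq
          have hq1 : ℓ q ≤ c := hFmQ q hq
          have hqy : (0:ℝ) < ℓ y - ℓ q := by linarith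
          rw [crossPt_combo, smul_add, smul_smul, smul_smul]
          congr 1
          · congr 1
            rw [hcoef]
            field_simp
            ring
          · congr 1
            rw [hcoef]
            field_simp
        rw [Finset.sum_congr rfl hterm, Finset.sum_add_distrib]
        have e1 : ∑ q ∈ Fm, (α⁻¹ * w q * ((ℓ y - c) / (ℓ y - ℓ u))) • q
            = ((ℓ y - c) / (ℓ y - ℓ u)) • u := by
          calc ∑ q ∈ Fm, (α⁻¹ * w q * ((ℓ y - c) / (ℓ y - ℓ u))) • q
              = (((ℓ y - c) / (ℓ y - ℓ u)) * α⁻¹) • ∑ q ∈ Fm, w q • q := by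
                rw [Finset.smul_sum]
                refine Finset.sum_congr rfl (fun q hq => ?_)
                rw [smul_smul]
                congr 1
                ring
            _ = (((ℓ y - c) / (ℓ y - ℓ u)) * α⁻¹) • (α • u) := by rw [hαu]
            _ = ((ℓ y - c) / (ℓ y - ℓ u)) • u := by
                rw [smul_smul, mul_assoc, inv_mul_cancel₀ (ne_of_gt hαpos), mul_one]
        have e2 : ∑ q ∈ Fm, (α⁻¹ * (w q * (c - ℓ q) / (ℓ y - ℓ u))) • y
            = ((c - ℓ u) / (ℓ y - ℓ u)) • y := by
          rw [← Finset.sum_smul]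
          congr 1
          have e : ∑ q ∈ Fm, α⁻¹ * (w q * (c - ℓ q) / (ℓ y - ℓ u))
              = α⁻¹ * ((∑ q ∈ Fm, w q * (c - ℓ q)) / (ℓ y - ℓ u)) := by
            rw [Finset.sum_div, ← Finset.mul_sum]
          have e' : ∑ q ∈ Fm, w q * (c - ℓ q) = α * (c - ℓ u) := by
            have e'' : ∑ q ∈ Fm, w q * (c - ℓ q)
                = (∑ q ∈ Fm, w q) * c - ∑ q ∈ Fm, w q * ℓ q := by
              rw [Finset.sum_mul, ← Finset.sum_sub_distrib]
              exact Finset.sum_congr rfl (fun q _ => by ring)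
            rw [e'', ← hα, ← hαℓu]; ring
          rw [e, e', mul_div_assoc, ← mul_assoc,
            inv_mul_cancel₀ (ne_of_gt hαpos), one_mul]
        rw [e1, e2, crossPt_combo]
        congr 1
        congr 1
        field_simp
        ring
      rw [← hcomb]
      have := Finset.centerMass_mem_convexHull (s := Q') Fm hcoef0
        (by rw [hsumcoef]; norm_num) (z := fun q => crossPt ℓ c q y)
        (fun q hq => Or.inr ⟨(q, y), ⟨hq, hy⟩, rfl⟩)
      rwa [Finset.centerMass_eq_of_sum_1 _ _ hsumcoef] at this
    -- assembly
    set γ : E → ℝ := fun y => w y * ((ℓ y - ℓ u) / (c - ℓ u)) with hγ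
    have hγ0 : ∀ y ∈ Fp, 0 ≤ γ y := by
      intro y hy
      have := hw0 y (Finset.filter_subset _ _ hy)
      have h2 : (0:ℝ) < ℓ y - ℓ u := by linarith [hFpQ y hy]
      exact mul_nonneg this (div_nonneg h2.le hcu.le)
    set Γ : ℝ := ∑ y ∈ Fp, γ y with hΓ
    have hΓ0 : 0 ≤ Γ := Finset.sum_nonneg hγ0
    have hγτ : ∀ y ∈ Fp, γ y • crossPt ℓ c u y = γ y • u + w y • y - w y • u := by
      intro y hy
      have hyc : c < ℓ y := hFpQ y hy
      have hyu : (0:ℝ) < ℓ y - ℓ u := by linarith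
      have hγw : γ y * ((c - ℓ u) / (ℓ y - ℓ u)) = w y := by
        rw [hγ]
        field_simp
      have hcross : crossPt ℓ c u y = u + ((c - ℓ u) / (ℓ y - ℓ u)) • (y - u) := rfl
      have e : γ y • crossPt ℓ c u y
          = γ y • u + (γ y * ((c - ℓ u) / (ℓ y - ℓ u))) • (y - u) := by
        rw [hcross, smul_add, smul_smul]
      rw [e, hγw, smul_sub]
      abel
    have hx_eq : x = (1 - Γ) • u + ∑ y ∈ Fp, γ y • crossPt ℓ c u y := by
      rw [Finset.sum_congr rfl hγτ]
      have e : ∑ y ∈ Fp, (γ y • u + w y • y - w y • u)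
          = Γ • u + (∑ y ∈ Fp, w y • y) - β • u := by
        rw [Finset.sum_sub_distrib, Finset.sum_add_distrib, ← Finset.sum_smul,
          ← Finset.sum_smul, ← hΓ, ← hβ]
      rw [e, hxsplit, ← hαu]
      have hαval : α = 1 - β := by linarith
      rw [hαval]
      module
    have hℓx_eq : ℓ x = (1 - Γ) * ℓ u + Γ * c := by
      rw [hx_eq, map_add, map_smul, smul_eq_mul, map_sum]
      congr 1
      have e : ∀ y ∈ Fp, ℓ (γ y • crossPt ℓ c u y) = γ y * c := by
        intro y hy
        rw [map_smul, smul_eq_mul, ell_crossPt hℓu.le (hFpQ y hy)]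
      rw [Finset.sum_congr rfl e, ← Finset.sum_mul, ← hΓ]
    have hΓ1 : Γ ≤ 1 := by nlinarith
    by_cases hΓz : Γ = 0
    · have hγz : ∀ y ∈ Fp, γ y = 0 := by
        rw [← Finset.sum_eq_zero_iff_of_nonneg hγ0]; exact hΓz
      have : x = u := by
        rw [hx_eq, hΓz, Finset.sum_eq_zero (fun y hy => by rw [hγz y hy, zero_smul])]
        simp
      rw [this]; exact humem
    · have hΓpos : 0 < Γ := lt_of_le_of_ne hΓ0 (Ne.symm hΓz)
      set v : E := Γ⁻¹ • ∑ y ∈ Fp, γ y • crossPt ℓ c u y with hv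
      clear_value v
      have hvmem : v ∈ convexHull ℝ Q' := by
        have e : v = ∑ y ∈ Fp, (Γ⁻¹ * γ y) • crossPt ℓ c u y := by
          rw [hv, Finset.smul_sum]
          exact Finset.sum_congr rfl (fun y _ => by rw [smul_smul])
        rw [e]
        apply Convex.sum_mem (convex_convexHull ℝ Q')
        · intro y hy
          exact mul_nonneg (inv_nonneg.2 hΓ0) (hγ0 y hy)
        · rw [← Finset.mul_sum, ← hΓ, inv_mul_cancel₀ hΓz]
        · intro y hy
          exact hm_mem y hy
      have : x = (1 - Γ) • u + Γ • v := by
        rw [hx_eq, hv, smul_smul, mul_inv_cancel₀ hΓz, one_smul]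
      rw [this]
      exact (convex_convexHull ℝ Q') humem hvmem (by linarith) hΓ0 (by ring)


/-- The broken-line coordinate used on each side of the square annulus. -/
def plA (t s : ℝ) : ℝ := min (t + s - 1) (2*s - t + 2)

lemma plA_strictMono (t : ℝ) : StrictMono (plA t) := by
  intro a b hab
  exact lt_min ((min_le_left _ _).trans_lt (by simp [plA]; linarith))
    ((min_le_right _ _).trans_lt (by simp [plA]; linarith))

lemma plA_one {t : ℝ} (h : t ≤ 2) : plA t 1 = t := by
  rw [plA, min_eq_left] <;> linarith

lemma plA_neg_one {t : ℝ} (h : 1 ≤ t) : plA t (-1) = -t := by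
  rw [plA, min_eq_right] <;> linarith

lemma plA_le_t {t s : ℝ} (hs : s ≤ 1) : plA t s ≤ t :=
  (min_le_left _ _).trans (by linarith)

lemma neg_t_le_plA {t s : ℝ} (ht : 1 ≤ t) (hs : -1 ≤ s) : -t ≤ plA t s :=
  le_min (by linarith) (by linarith)

lemma plA_lt_t {t s : ℝ} (ht : t ≤ 2) (hs : s < 1) : plA t s < t :=
  (plA_strictMono t hs).trans_le (le_of_eq (plA_one ht))

lemma neg_t_lt_plA {t s : ℝ} (ht : 1 ≤ t) (hs : -1 < s) : -t < plA t s :=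
  (plA_neg_one ht) ▸ plA_strictMono t hs

/-- the square-annulus coordinates -/
def sideB (t : ℝ) (y : ℝ × ℝ) : ℝ × ℝ :=
  if |y.2| = 1 then (plA t y.1, y.2 * t) else (y.1 * t, plA t y.2)

lemma sideB_inj {t t' : ℝ} {y y' : ℝ × ℝ} (ht1 : 1 < t) (ht2 : t < 2)
    (ht1' : 1 < t') (ht2' : t' < 2) (hy : |y.1| ⊔ |y.2| = 1) (hy' : |y'.1| ⊔ |y'.2| = 1)
    (h : sideB t y = sideB t' y') : t = t' ∧ y = y' := by
  have hy1 : |y.1| ≤ 1 := le_of_le_of_eq (le_max_left _ _) hy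
  have hy2 : |y.2| ≤ 1 := le_of_le_of_eq (le_max_right _ _) hy
  have hy1' : |y'.1| ≤ 1 := le_of_le_of_eq (le_max_left _ _) hy'
  have hy2' : |y'.2| ≤ 1 := le_of_le_of_eq (le_max_right _ _) hy'
  have hy1a := abs_le.1 hy1
  have hy2a := abs_le.1 hy2
  have hy1a' := abs_le.1 hy1'
  have hy2a' := abs_le.1 hy2'
  by_cases h2 : |y.2| = 1 <;> by_cases h2' : |y'.2| = 1
  · -- both on horizontal sides
    rw [sideB, sideB, if_pos h2, if_pos h2', Prod.mk.injEq] at h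
    rcases (abs_eq (by norm_num : (0:ℝ) ≤ 1)).1 h2 with e2 | e2 <;>
      rcases (abs_eq (by norm_num : (0:ℝ) ≤ 1)).1 h2' with e2' | e2' <;>
      rw [e2, e2'] at h
    · have htt : t = t' := by have := h.2; linarith
      subst htt
      have h11 : y.1 = y'.1 := (plA_strictMono t).injective h.1
      exact ⟨rfl, Prod.ext h11 (e2.trans e2'.symm)⟩
    · exfalso; have := h.2; linarith
    · exfalso; have := h.2; linarith
    · have htt : t = t' := by have := h.2; linarith
      subst htt
      have h11 : y.1 = y'.1 := (plA_strictMono t).injective h.1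
      exact ⟨rfl, Prod.ext h11 (e2.trans e2'.symm)⟩
  · -- y horizontal, y' vertical : impossible
    exfalso
    rw [sideB, sideB, if_pos h2, if_neg h2', Prod.mk.injEq] at h
    have h1' : |y'.1| = 1 := by
      rcases max_choice |y'.1| |y'.2| with hmx | hmx
      · rw [hmx] at hy'; exact hy'
      · exact absurd (hmx ▸ hy') h2'
    have hys2' : |y'.2| < 1 := lt_of_le_of_ne hy2' h2'
    have hys2a' := abs_lt.1 hys2'
    -- first coordinates: t' ≤ t
    have hb1 : |plA t y.1| ≤ t := abs_le.2 ⟨neg_t_le_plA ht1.le hy1a.1, plA_le_t hy1a.2⟩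
    have hb2 : |y'.1 * t'| = t' := by
      rw [abs_mul, h1', one_mul, abs_of_pos (by linarith)]
    have hle1 : t' ≤ t := by rw [← hb2, ← h.1]; exact hb1
    -- second coordinates: t < t'
    have hc1 : |y.2 * t| = t := by rw [abs_mul, h2, one_mul, abs_of_pos (by linarith)]
    have hc2 : |plA t' y'.2| < t' :=
      abs_lt.2 ⟨neg_t_lt_plA ht1'.le hys2a'.1, plA_lt_t ht2'.le hys2a'.2⟩
    have : t < t' := by rw [← hc1, h.2]; exact hc2
    linarith
  · -- symmetric impossible case
    exfalso
    rw [sideB, sideB, if_neg h2, if_pos h2', Prod.mk.injEq] at h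
    have h1 : |y.1| = 1 := by
      rcases max_choice |y.1| |y.2| with hmx | hmx
      · rw [hmx] at hy; exact hy
      · exact absurd (hmx ▸ hy) h2
    have hys2 : |y.2| < 1 := lt_of_le_of_ne hy2 h2
    have hys2a := abs_lt.1 hys2
    have hb1 : |plA t' y'.1| ≤ t' := abs_le.2 ⟨neg_t_le_plA ht1'.le hy1a'.1, plA_le_t hy1a'.2⟩
    have hb2 : |y.1 * t| = t := by rw [abs_mul, h1, one_mul, abs_of_pos (by linarith)]
    have hle1 : t ≤ t' := by rw [← hb2, h.1]; exact hb1
    have hc1 : |y'.2 * t'| = t' := by rw [abs_mul, h2', one_mul, abs_of_pos (by linarith)]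
    have hc2 : |plA t y.2| < t :=
      abs_lt.2 ⟨neg_t_lt_plA ht1.le hys2a.1, plA_lt_t ht2.le hys2a.2⟩
    have : t' < t := by rw [← hc1, ← h.2]; exact hc2
    linarith
  · -- both vertical
    rw [sideB, sideB, if_neg h2, if_neg h2', Prod.mk.injEq] at h
    have h1 : |y.1| = 1 := by
      rcases max_choice |y.1| |y.2| with hmx | hmx
      · rw [hmx] at hy; exact hy
      · exact absurd (hmx ▸ hy) h2
    have h1' : |y'.1| = 1 := by
      rcases max_choice |y'.1| |y'.2| with hmx | hmx
      · rw [hmx] at hy'; exact hy'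
      · exact absurd (hmx ▸ hy') h2'
    have htt : t = t' := by
      have e1 : |y.1 * t| = t := by rw [abs_mul, h1, one_mul, abs_of_pos (by linarith)]
      have e2 : |y'.1 * t'| = t' := by rw [abs_mul, h1', one_mul, abs_of_pos (by linarith)]
      rw [← e1, ← e2, h.1]
    subst htt
    have h11 : y.1 = y'.1 := mul_right_cancel₀ (by linarith : t ≠ 0) h.1
    have h22 : y.2 = y'.2 := (plA_strictMono t).injective h.2
    exact ⟨rfl, Prod.ext h11 h22⟩

lemma mem_vseg {σ : ℝ} {y : ℝ × ℝ} :
    y ∈ segment ℝ ((σ, -1) : ℝ × ℝ) (σ, 1) ↔ y.1 = σ ∧ -1 ≤ y.2 ∧ y.2 ≤ 1 := by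
  constructor
  · rintro ⟨a, b, ha, hb, hab, heq⟩
    rw [Prod.smul_mk, Prod.smul_mk, Prod.mk_add_mk] at heq
    have h1 := congrArg Prod.fst heq
    have h2 := congrArg Prod.snd heq
    simp only [smul_eq_mul] at h1 h2
    refine ⟨?_, ?_, ?_⟩
    · rw [← h1]; linear_combination σ * hab
    · rw [← h2]; nlinarith
    · rw [← h2]; nlinarith
  · rintro ⟨h1, h2, h3⟩
    refine ⟨(1 - y.2)/2, (y.2 + 1)/2, by linarith, by linarith, by ring, ?_⟩
    rw [Prod.smul_mk, Prod.smul_mk, Prod.mk_add_mk]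
    simp only [smul_eq_mul]
    rw [← h1]
    exact Prod.ext (by ring) (by ring)

lemma mem_hseg {σ : ℝ} {y : ℝ × ℝ} :
    y ∈ segment ℝ ((-1, σ) : ℝ × ℝ) (1, σ) ↔ y.2 = σ ∧ -1 ≤ y.1 ∧ y.1 ≤ 1 := by
  constructor
  · rintro ⟨a, b, ha, hb, hab, heq⟩
    rw [Prod.smul_mk, Prod.smul_mk, Prod.mk_add_mk] at heq
    have h1 := congrArg Prod.fst heq
    have h2 := congrArg Prod.snd heq
    simp only [smul_eq_mul] at h1 h2
    refine ⟨?_, ?_, ?_⟩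
    · rw [← h2]; linear_combination σ * hab
    · rw [← h1]; nlinarith
    · rw [← h1]; nlinarith
  · rintro ⟨h1, h2, h3⟩
    refine ⟨(1 - y.1)/2, (y.1 + 1)/2, by linarith, by linarith, by ring, ?_⟩
    rw [Prod.smul_mk, Prod.smul_mk, Prod.mk_add_mk]
    simp only [smul_eq_mul]
    rw [← h1]
    exact Prod.ext (by ring) (by ring)

section Builders
variable {m d : ℕ}

/-- generic affine functional on `ℝ^m × ℝ²` of the form `k + a·(gP x)_{i0} + b·y₁ + c·y₂` -/
def lcf (k a b c : ℝ) (i0 : Fin d) (gP : (Fin m → ℝ) →ᵃ[ℝ] (Fin d → ℝ)) :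
    ((Fin m → ℝ) × (ℝ × ℝ)) →ᵃ[ℝ] ℝ :=
  AffineMap.const ℝ _ k
    + a • ((AffineMap.proj i0).comp (gP.comp (AffineMap.fst : (Fin m → ℝ) × (ℝ × ℝ) →ᵃ[ℝ] (Fin m → ℝ))))
    + b • ((LinearMap.fst ℝ ℝ ℝ).comp (LinearMap.snd ℝ (Fin m → ℝ) (ℝ × ℝ))).toAffineMap
    + c • ((LinearMap.snd ℝ ℝ ℝ).comp (LinearMap.snd ℝ (Fin m → ℝ) (ℝ × ℝ))).toAffineMap

@[simp] lemma lcf_apply (k a b c : ℝ) (i0 : Fin d) (gP : (Fin m → ℝ) →ᵃ[ℝ] (Fin d → ℝ))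
    (z : (Fin m → ℝ) × (ℝ × ℝ)) :
    lcf k a b c i0 gP z = k + a * gP z.1 i0 + b * z.2.1 + c * z.2.2 := by
  simp [lcf]

/-- the candidate affine map on a piece, with prescribed first two coordinates -/
def candAff (hd : 0 < d) (gP : (Fin m → ℝ) →ᵃ[ℝ] (Fin d → ℝ))
    (c0 c1 : ((Fin m → ℝ) × (ℝ × ℝ)) →ᵃ[ℝ] ℝ) :
    ((Fin m → ℝ) × (ℝ × ℝ)) →ᵃ[ℝ] (Fin (d + 1) → ℝ) :=
  AffineMap.pi (fun i : Fin (d + 1) =>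
    if (i : ℕ) = 0 then c0 else if (i : ℕ) = 1 then c1
    else (AffineMap.proj (⟨(i : ℕ) - 1, by omega⟩ : Fin d)).comp
      (gP.comp (AffineMap.fst : (Fin m → ℝ) × (ℝ × ℝ) →ᵃ[ℝ] (Fin m → ℝ))))

lemma candAff_apply0 {hd : 0 < d} {gP : (Fin m → ℝ) →ᵃ[ℝ] (Fin d → ℝ)}
    {c0 c1 : ((Fin m → ℝ) × (ℝ × ℝ)) →ᵃ[ℝ] ℝ} {z} {i : Fin (d+1)} (hi : (i : ℕ) = 0) :
    candAff hd gP c0 c1 z i = c0 z := by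
  rw [candAff, AffineMap.pi_apply, if_pos hi]

lemma candAff_apply1 {hd : 0 < d} {gP : (Fin m → ℝ) →ᵃ[ℝ] (Fin d → ℝ)}
    {c0 c1 : ((Fin m → ℝ) × (ℝ × ℝ)) →ᵃ[ℝ] ℝ} {z} {i : Fin (d+1)} (hi : (i : ℕ) = 1) :
    candAff hd gP c0 c1 z i = c1 z := by
  rw [candAff, AffineMap.pi_apply, if_neg (by omega), if_pos hi]

lemma candAff_apply2 {hd : 0 < d} {gP : (Fin m → ℝ) →ᵃ[ℝ] (Fin d → ℝ)}
    {c0 c1 : ((Fin m → ℝ) × (ℝ × ℝ)) →ᵃ[ℝ] ℝ} {z} {i : Fin (d+1)}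
    (hi0 : ¬ (i : ℕ) = 0) (hi1 : ¬ (i : ℕ) = 1) :
    candAff hd gP c0 c1 z i = gP z.1 ⟨(i : ℕ) - 1, by omega⟩ := by
  rw [candAff, AffineMap.pi_apply, if_neg hi0, if_neg hi1]
  rfl

end Builders

/-- every finite set of reals is bounded in absolute value -/
lemma finite_abs_bound {S : Set ℝ} (h : S.Finite) : ∃ M, 0 ≤ M ∧ ∀ a ∈ S, |a| ≤ M := by
  obtain ⟨M, hM⟩ := (h.image abs).bddAbove
  exact ⟨max M 0, le_max_right _ _,
    fun a ha => le_trans (hM ⟨a, ha, rfl⟩) (le_max_left _ _)⟩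

/-- an affine functional is bounded on a polytope -/
lemma affine_abs_bound {E : Type*} [AddCommGroup E] [Module ℝ E]
    (φ : E →ᵃ[ℝ] ℝ) {Q : Set E} (hQ : Q.Finite) :
    ∃ M, 0 ≤ M ∧ ∀ x ∈ convexHull ℝ Q, |φ x| ≤ M := by
  obtain ⟨M, hM0, hM⟩ := finite_abs_bound (hQ.image φ)
  refine ⟨M, hM0, fun x hx => ?_⟩
  have hmem : φ x ∈ convexHull ℝ (φ '' Q) := by
    rw [← AffineMap.image_convexHull]
    exact ⟨x, hx, rfl⟩
  have hsub : convexHull ℝ (φ '' Q) ⊆ Icc (-M) M := by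
    apply convexHull_min _ (convex_Icc _ _)
    intro a ha
    have := hM a ha
    exact ⟨by linarith [(abs_le.1 this).1], (abs_le.1 this).2⟩
  obtain ⟨hl, hr⟩ := hsub hmem
  exact abs_le.2 ⟨hl, hr⟩

lemma polytope_inter_nonneg {E : Type*} [AddCommGroup E] [Module ℝ E]
    {Q : Set E} (hQ : Q.Finite) (ℓa : E →ᵃ[ℝ] ℝ) :
    ∃ Q' : Set E, Q'.Finite ∧ convexHull ℝ Q ∩ {x | 0 ≤ ℓa x} = convexHull ℝ Q' := by
  obtain ⟨Q', h1, h2⟩ := hull_inter_halfspace hQ.toFinset (-ℓa.linear) (ℓa 0)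
  refine ⟨Q', h1, ?_⟩
  rw [← h2, hQ.coe_toFinset]
  congr 1
  ext x
  simp only [mem_setOf_eq, LinearMap.neg_apply]
  have hdec : ℓa x = ℓa.linear x + ℓa 0 := by
    conv_lhs => rw [AffineMap.decomp ℓa]
    rfl
  constructor <;> intro hh <;> linarith

section Pieces
variable {m d : ℕ}

/-- one of the 8 polytope pieces over a polytope `P` of the decomposition -/
def pieceSet (i0 : Fin d) (gP : (Fin m → ℝ) →ᵃ[ℝ] (Fin d → ℝ)) (ε σ : ℝ)
    (vb db : Bool) (P : Set (Fin m → ℝ)) : Set ((Fin m → ℝ) × (ℝ × ℝ)) :=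
  (P ×ˢ (if vb then segment ℝ ((σ, -1) : ℝ × ℝ) (σ, 1)
      else segment ℝ ((-1, σ) : ℝ × ℝ) (1, σ))) ∩
    {z | 0 ≤ lcf 0 (if db then -(2*ε) else 2*ε)
      (if vb then 0 else if db then 1 else -1)
      (if vb then if db then 1 else -1 else 0) i0 gP z}

/-- the embedding map of `K × S¹` -/
def gmap (hd : 0 < d) (f : (Fin m → ℝ) → (Fin d → ℝ)) (ε : ℝ) :
    ((Fin m → ℝ) × (ℝ × ℝ)) → (Fin (d + 1) → ℝ) := fun z i =>
  if (i : ℕ) = 0 then (sideB (3/2 + ε * f z.1 ⟨0, hd⟩) z.2).1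
  else if (i : ℕ) = 1 then (sideB (3/2 + ε * f z.1 ⟨0, hd⟩) z.2).2
  else f z.1 ⟨(i : ℕ) - 1, by omega⟩

lemma pieceSet_polytope (i0 : Fin d) (gP : (Fin m → ℝ) →ᵃ[ℝ] (Fin d → ℝ)) (ε σ : ℝ)
    (vb db : Bool) {P Q : Set (Fin m → ℝ)} (hQ : Q.Finite) (hPQ : P = convexHull ℝ Q) :
    ∃ Q' : Set ((Fin m → ℝ) × (ℝ × ℝ)), Q'.Finite ∧
      pieceSet i0 gP ε σ vb db P = convexHull ℝ Q' := by
  rw [pieceSet, hPQ]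
  cases vb
  · simp only [Bool.false_eq_true, if_false]
    rw [← convexHull_pair, ← convexHull_prod]
    exact polytope_inter_nonneg (hQ.prod ((Set.finite_singleton _).insert _)) _
  · simp only [if_true]
    rw [← convexHull_pair, ← convexHull_prod]
    exact polytope_inter_nonneg (hQ.prod ((Set.finite_singleton _).insert _)) _

/-- on each piece (intersected with the domain) the embedding map agrees with an affine map -/
lemma piece_eqOn (hd : 0 < d) {f : (Fin m → ℝ) → (Fin d → ℝ)} {K : Set (Fin m → ℝ)}
    {gPP : (Fin m → ℝ) →ᵃ[ℝ] (Fin d → ℝ)} {P : Set (Fin m → ℝ)} {ε : ℝ}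
    (hgg : Set.EqOn f gPP (P ∩ K))
    (htb : ∀ x ∈ K, 1 < 3/2 + ε * f x ⟨0, hd⟩ ∧ 3/2 + ε * f x ⟨0, hd⟩ < 2)
    (σ : ℝ) (hσ : σ = 1 ∨ σ = -1) (vb db : Bool) :
    ∃ gaff : ((Fin m → ℝ) × (ℝ × ℝ)) →ᵃ[ℝ] (Fin (d+1) → ℝ),
      Set.EqOn (gmap hd f ε) gaff
        (pieceSet ⟨0, hd⟩ gPP ε σ vb db P ∩ (K ×ˢ plCircle)) := by
  have hσabs : |σ| = 1 := by rcases hσ with h | h <;> rw [h] <;> norm_num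
  cases vb <;> cases db
  · -- horizontal, lower cut (min is the right branch)
    refine ⟨candAff hd gPP (lcf (1/2) (-ε) 2 0 ⟨0,hd⟩ gPP)
      (lcf (3*σ/2) (σ*ε) 0 0 ⟨0,hd⟩ gPP), ?_⟩
    rintro ⟨x, y⟩ ⟨⟨⟨hxP, hyseg⟩, hcut⟩, hxK, hyC⟩
    simp only [Bool.false_eq_true, if_false, mem_hseg] at hyseg
    obtain ⟨hy2, hy1a, hy1b⟩ := hyseg
    rw [mem_setOf_eq, lcf_apply] at hcut
    simp only [Bool.false_eq_true, if_false] at hcut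
    have hfg : f x = gPP x := hgg ⟨hxP, hxK⟩
    obtain ⟨ht1, ht2⟩ := htb x hxK
    have hkey : ε * gPP x ⟨0,hd⟩ = (3/2 + ε * f x ⟨0, hd⟩) - 3/2 := by
      rw [← hfg]; ring
    have hy2abs : |y.2| = 1 := by rw [hy2]; exact hσabs
    funext i
    by_cases hI0 : (i : ℕ) = 0
    · rw [candAff_apply0 hI0]
      show (if (i:ℕ) = 0 then (sideB _ (x,y).2).1 else _) = _
      rw [if_pos hI0, sideB, if_pos hy2abs, lcf_apply, plA, min_eq_right (by linarith)]
      linarith [hkey]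
    · by_cases hI1 : (i : ℕ) = 1
      · rw [candAff_apply1 hI1]
        show (if (i:ℕ) = 0 then _ else if (i:ℕ) = 1 then (sideB _ (x,y).2).2 else _) = _
        rw [if_neg hI0, if_pos hI1, sideB, if_pos hy2abs, lcf_apply]
        show y.2 * (3/2 + ε * f x ⟨0, hd⟩) = _
        rw [hy2]
        linear_combination (-σ) * hkey
      · rw [candAff_apply2 hI0 hI1]
        show (if (i:ℕ) = 0 then _ else if (i:ℕ) = 1 then _
          else f (x,y).1 ⟨(i:ℕ) - 1, by omega⟩) = _
        rw [if_neg hI0, if_neg hI1, hfg]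
  · -- horizontal, upper cut
    refine ⟨candAff hd gPP (lcf (1/2) ε 1 0 ⟨0,hd⟩ gPP)
      (lcf (3*σ/2) (σ*ε) 0 0 ⟨0,hd⟩ gPP), ?_⟩
    rintro ⟨x, y⟩ ⟨⟨⟨hxP, hyseg⟩, hcut⟩, hxK, hyC⟩
    simp only [Bool.false_eq_true, if_false, mem_hseg] at hyseg
    obtain ⟨hy2, hy1a, hy1b⟩ := hyseg
    rw [mem_setOf_eq, lcf_apply] at hcut
    simp only [Bool.false_eq_true, if_false, if_true] at hcut
    have hfg : f x = gPP x := hgg ⟨hxP, hxK⟩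
    obtain ⟨ht1, ht2⟩ := htb x hxK
    have hkey : ε * gPP x ⟨0,hd⟩ = (3/2 + ε * f x ⟨0, hd⟩) - 3/2 := by
      rw [← hfg]; ring
    have hy2abs : |y.2| = 1 := by rw [hy2]; exact hσabs
    funext i
    by_cases hI0 : (i : ℕ) = 0
    · rw [candAff_apply0 hI0]
      show (if (i:ℕ) = 0 then (sideB _ (x,y).2).1 else _) = _
      rw [if_pos hI0, sideB, if_pos hy2abs, lcf_apply, plA, min_eq_left (by linarith)]
      linarith [hkey]
    · by_cases hI1 : (i : ℕ) = 1
      · rw [candAff_apply1 hI1]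
        show (if (i:ℕ) = 0 then _ else if (i:ℕ) = 1 then (sideB _ (x,y).2).2 else _) = _
        rw [if_neg hI0, if_pos hI1, sideB, if_pos hy2abs, lcf_apply]
        show y.2 * (3/2 + ε * f x ⟨0, hd⟩) = _
        rw [hy2]
        linear_combination (-σ) * hkey
      · rw [candAff_apply2 hI0 hI1]
        show (if (i:ℕ) = 0 then _ else if (i:ℕ) = 1 then _
          else f (x,y).1 ⟨(i:ℕ) - 1, by omega⟩) = _
        rw [if_neg hI0, if_neg hI1, hfg]
  · -- vertical, lower cut
    refine ⟨candAff hd gPP (lcf (3*σ/2) (σ*ε) 0 0 ⟨0,hd⟩ gPP)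
      (lcf (1/2) (-ε) 0 2 ⟨0,hd⟩ gPP), ?_⟩
    rintro ⟨x, y⟩ ⟨⟨⟨hxP, hyseg⟩, hcut⟩, hxK, hyC⟩
    simp only [if_true, mem_vseg] at hyseg
    obtain ⟨hy1, hy2a, hy2b⟩ := hyseg
    rw [mem_setOf_eq, lcf_apply] at hcut
    simp only [Bool.false_eq_true, if_false, if_true] at hcut
    have hfg : f x = gPP x := hgg ⟨hxP, hxK⟩
    obtain ⟨ht1, ht2⟩ := htb x hxK
    have hkey : ε * gPP x ⟨0,hd⟩ = (3/2 + ε * f x ⟨0, hd⟩) - 3/2 := by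
      rw [← hfg]; ring
    funext i
    by_cases hI0 : (i : ℕ) = 0
    · rw [candAff_apply0 hI0]
      show (if (i:ℕ) = 0 then (sideB _ (x,y).2).1 else _) = _
      rw [if_pos hI0, sideB, lcf_apply]
      by_cases hb2 : |y.2| = 1
      · rw [if_pos hb2]
        show plA _ y.1 = _
        rw [hy1]
        rcases hσ with hσ' | hσ' <;> rw [hσ']
        · rw [plA_one (by linarith)]
          linarith [hkey]
        · rw [plA_neg_one (by linarith)]
          linarith [hkey]
      · rw [if_neg hb2]
        show y.1 * _ = _
        rw [hy1]
        linear_combination (-σ) * hkey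
    · by_cases hI1 : (i : ℕ) = 1
      · rw [candAff_apply1 hI1]
        show (if (i:ℕ) = 0 then _ else if (i:ℕ) = 1 then (sideB _ (x,y).2).2 else _) = _
        rw [if_neg hI0, if_pos hI1, sideB, lcf_apply]
        by_cases hb2 : |y.2| = 1
        · rw [if_pos hb2]
          show y.2 * _ = _
          rcases (abs_eq (by norm_num : (0:ℝ) ≤ 1)).1 hb2 with e | e
          · exfalso; rw [e] at hcut; linarith [hkey]
          · rw [e]; linarith [hkey]
        · rw [if_neg hb2]
          show plA _ y.2 = _
          rw [plA, min_eq_right (by linarith)]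
          linarith [hkey]
      · rw [candAff_apply2 hI0 hI1]
        show (if (i:ℕ) = 0 then _ else if (i:ℕ) = 1 then _
          else f (x,y).1 ⟨(i:ℕ) - 1, by omega⟩) = _
        rw [if_neg hI0, if_neg hI1, hfg]
  · -- vertical, upper cut
    refine ⟨candAff hd gPP (lcf (3*σ/2) (σ*ε) 0 0 ⟨0,hd⟩ gPP)
      (lcf (1/2) ε 0 1 ⟨0,hd⟩ gPP), ?_⟩
    rintro ⟨x, y⟩ ⟨⟨⟨hxP, hyseg⟩, hcut⟩, hxK, hyC⟩
    simp only [if_true, mem_vseg] at hyseg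
    obtain ⟨hy1, hy2a, hy2b⟩ := hyseg
    rw [mem_setOf_eq, lcf_apply] at hcut
    simp only [if_true] at hcut
    have hfg : f x = gPP x := hgg ⟨hxP, hxK⟩
    obtain ⟨ht1, ht2⟩ := htb x hxK
    have hkey : ε * gPP x ⟨0,hd⟩ = (3/2 + ε * f x ⟨0, hd⟩) - 3/2 := by
      rw [← hfg]; ring
    funext i
    by_cases hI0 : (i : ℕ) = 0
    · rw [candAff_apply0 hI0]
      show (if (i:ℕ) = 0 then (sideB _ (x,y).2).1 else _) = _
      rw [if_pos hI0, sideB, lcf_apply]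
      by_cases hb2 : |y.2| = 1
      · rw [if_pos hb2]
        show plA _ y.1 = _
        rw [hy1]
        rcases hσ with hσ' | hσ' <;> rw [hσ']
        · rw [plA_one (by linarith)]
          linarith [hkey]
        · rw [plA_neg_one (by linarith)]
          linarith [hkey]
      · rw [if_neg hb2]
        show y.1 * _ = _
        rw [hy1]
        linear_combination (-σ) * hkey
    · by_cases hI1 : (i : ℕ) = 1
      · rw [candAff_apply1 hI1]
        show (if (i:ℕ) = 0 then _ else if (i:ℕ) = 1 then (sideB _ (x,y).2).2 else _) = _
        rw [if_neg hI0, if_pos hI1, sideB, lcf_apply]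
        by_cases hb2 : |y.2| = 1
        · rw [if_pos hb2]
          show y.2 * _ = _
          rcases (abs_eq (by norm_num : (0:ℝ) ≤ 1)).1 hb2 with e | e
          · rw [e]; linarith [hkey]
          · exfalso; rw [e] at hcut; linarith [hkey]
        · rw [if_neg hb2]
          show plA _ y.2 = _
          rw [plA, min_eq_left (by linarith)]
          linarith [hkey]
      · rw [candAff_apply2 hI0 hI1]
        show (if (i:ℕ) = 0 then _ else if (i:ℕ) = 1 then _
          else f (x,y).1 ⟨(i:ℕ) - 1, by omega⟩) = _
        rw [if_neg hI0, if_neg hI1, hfg]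

end Pieces

/-- If a compact polyhedron `K ⊆ ℝ^m` embeds piecewise linearly into `ℝ^d` with `d > 0`,
then `K × S¹` embeds piecewise linearly into `ℝ^{d+1}`. -/
theorem prod_circle_embeds {m d : ℕ} (hd : 0 < d) (K : Set (Fin m → ℝ))
    (hK : IsPolyhedron K)
    (h : ∃ f : (Fin m → ℝ) → (Fin d → ℝ), IsPLOn f K ∧ InjOn f K) :
    ∃ g : ((Fin m → ℝ) × (ℝ × ℝ)) → (Fin (d + 1) → ℝ),
      IsPLOn g (K ×ˢ plCircle) ∧ InjOn g (K ×ˢ plCircle) := by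
  classical
  obtain ⟨f, ⟨T, hTfin, hTpoly, hTcov, hTaff⟩, hinj⟩ := h
  set i0 : Fin d := ⟨0, hd⟩ with hi0
  -- choose affine maps and vertex sets for the decomposition of f
  have hTaff' : ∀ P : Set (Fin m → ℝ),
      ∃ gg : (Fin m → ℝ) →ᵃ[ℝ] (Fin d → ℝ), P ∈ T → EqOn f gg (P ∩ K) := by
    intro P
    by_cases hP : P ∈ T
    · obtain ⟨gg, hgg⟩ := hTaff P hP
      exact ⟨gg, fun _ => hgg⟩
    · exact ⟨AffineMap.const ℝ _ 0, fun hc => absurd hc hP⟩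
  choose gP hgP using hTaff'
  have hTpoly' : ∀ P : Set (Fin m → ℝ),
      ∃ Q : Set (Fin m → ℝ), P ∈ T → (Q.Finite ∧ P = convexHull ℝ Q) := by
    intro P
    by_cases hP : P ∈ T
    · obtain ⟨Q, hQ⟩ := hTpoly P hP
      exact ⟨Q, fun _ => hQ⟩
    · exact ⟨∅, fun hc => absurd hc hP⟩
  choose QP hQP using hTpoly'
  -- a uniform bound for |f · i0| on K
  have hbound : ∃ R, 0 ≤ R ∧ ∀ x ∈ K, |f x i0| ≤ R := by
    have hPb : ∀ P : Set (Fin m → ℝ), ∃ M, 0 ≤ M ∧ (P ∈ T → ∀ x ∈ P ∩ K, |f x i0| ≤ M) := by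
      intro P
      by_cases hP : P ∈ T
      · obtain ⟨hQfin, hQeq⟩ := hQP P hP
        obtain ⟨M, hM0, hM⟩ := affine_abs_bound ((AffineMap.proj i0).comp (gP P)) hQfin
        refine ⟨M, hM0, fun _ x hx => ?_⟩
        rw [hgP P hP hx]
        have hxQ : x ∈ convexHull ℝ (QP P) := hQeq ▸ hx.1
        exact hM x hxQ
      · exact ⟨0, le_refl 0, fun hc => absurd hc hP⟩
    choose MP hMP using hPb
    obtain ⟨R, hR0, hR⟩ := finite_abs_bound (hTfin.image MP)
    refine ⟨R, hR0, fun x hx => ?_⟩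
    obtain ⟨P, hPT, hxP⟩ := hTcov hx
    exact le_trans ((hMP P).2 hPT x ⟨hxP, hx⟩)
      (le_trans (le_abs_self _) (hR _ ⟨P, hPT, rfl⟩))
  obtain ⟨R, hR0, hRb⟩ := hbound
  set ε : ℝ := (2*(R+1))⁻¹ with hε
  have hεpos : 0 < ε := by rw [hε]; positivity
  have hεR : ε * R < 1/2 := by
    rw [hε, inv_mul_lt_iff₀ (by positivity)]
    nlinarith
  have ht : ∀ x ∈ K, 1 < 3/2 + ε * f x i0 ∧ 3/2 + ε * f x i0 < 2 := by
    intro x hx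
    have hfb := abs_le.1 (hRb x hx)
    have h1 : ε * f x i0 ≤ ε * R := by
      apply mul_le_mul_of_nonneg_left hfb.2 hεpos.le
    have h2 : ε * (-R) ≤ ε * f x i0 := by
      apply mul_le_mul_of_nonneg_left hfb.1 hεpos.le
    constructor <;> nlinarith
  refine ⟨gmap hd f ε, ⟨?_, ?_⟩⟩
  · -- IsPLOn
    refine ⟨⋃ P ∈ T, Set.range (fun b : Bool × Bool × Bool =>
      pieceSet i0 (gP P) ε (if b.1 then 1 else -1) b.2.1 b.2.2 P), ?_, ?_, ?_, ?_⟩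
    · exact hTfin.biUnion (fun _ _ => Set.finite_range _)
    · -- each piece is a polytope
      intro S hS
      simp only [mem_iUnion, mem_range] at hS
      obtain ⟨P, hPT, b, rfl⟩ := hS
      obtain ⟨hQfin, hQeq⟩ := hQP P hPT
      exact pieceSet_polytope i0 (gP P) ε _ b.2.1 b.2.2 hQfin hQeq
    · -- coverage
      rintro ⟨x, y⟩ ⟨hxK, hyC⟩
      obtain ⟨P, hPT, hxP⟩ := hTcov hxK
      have hyC' : |y.1| ⊔ |y.2| = 1 := hyC
      have hy1 : |y.1| ≤ 1 := le_of_le_of_eq (le_max_left _ _) hyC'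
      have hy2 : |y.2| ≤ 1 := le_of_le_of_eq (le_max_right _ _) hyC'
      rw [mem_sUnion]
      by_cases hcase : |y.2| = 1
      · -- horizontal side
        rcases (abs_eq (by norm_num : (0:ℝ) ≤ 1)).1 hcase with e | e <;>
          rcases le_total (2*ε*(gP P x i0)) y.1 with hdir | hdir
        · refine ⟨pieceSet i0 (gP P) ε 1 false true P, ?_, ⟨⟨hxP, ?_⟩, ?_⟩⟩
          · simp only [mem_iUnion, mem_range]
            exact ⟨P, hPT, (true, false, true), rfl⟩
          · exact mem_hseg.2 ⟨e, (abs_le.1 hy1).1, (abs_le.1 hy1).2⟩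
          · show (0:ℝ) ≤ lcf 0 (if true then -(2*ε) else 2*ε)
              (if false then 0 else if true then 1 else -1)
              (if false then if true then 1 else -1 else 0) i0 (gP P) (x, y)
            rw [lcf_apply]
            simp only [if_true, Bool.false_eq_true, if_false]
            linarith
        · refine ⟨pieceSet i0 (gP P) ε 1 false false P, ?_, ⟨⟨hxP, ?_⟩, ?_⟩⟩
          · simp only [mem_iUnion, mem_range]
            exact ⟨P, hPT, (true, false, false), rfl⟩
          · exact mem_hseg.2 ⟨e, (abs_le.1 hy1).1, (abs_le.1 hy1).2⟩
          · show (0:ℝ) ≤ lcf 0 (if false then -(2*ε) else 2*ε)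
              (if false then 0 else if false then 1 else -1)
              (if false then if false then 1 else -1 else 0) i0 (gP P) (x, y)
            rw [lcf_apply]
            simp only [Bool.false_eq_true, if_false]
            linarith
        · refine ⟨pieceSet i0 (gP P) ε (-1) false true P, ?_, ⟨⟨hxP, ?_⟩, ?_⟩⟩
          · simp only [mem_iUnion, mem_range]
            exact ⟨P, hPT, (false, false, true), rfl⟩
          · exact mem_hseg.2 ⟨e, (abs_le.1 hy1).1, (abs_le.1 hy1).2⟩
          · show (0:ℝ) ≤ lcf 0 (if true then -(2*ε) else 2*ε)
              (if false then 0 else if true then 1 else -1)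
              (if false then if true then 1 else -1 else 0) i0 (gP P) (x, y)
            rw [lcf_apply]
            simp only [if_true, Bool.false_eq_true, if_false]
            linarith
        · refine ⟨pieceSet i0 (gP P) ε (-1) false false P, ?_, ⟨⟨hxP, ?_⟩, ?_⟩⟩
          · simp only [mem_iUnion, mem_range]
            exact ⟨P, hPT, (false, false, false), rfl⟩
          · exact mem_hseg.2 ⟨e, (abs_le.1 hy1).1, (abs_le.1 hy1).2⟩
          · show (0:ℝ) ≤ lcf 0 (if false then -(2*ε) else 2*ε)
              (if false then 0 else if false then 1 else -1)
              (if false then if false then 1 else -1 else 0) i0 (gP P) (x, y)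
            rw [lcf_apply]
            simp only [Bool.false_eq_true, if_false]
            linarith
      · -- vertical side
        have h1 : |y.1| = 1 := by
          rcases max_choice |y.1| |y.2| with hmx | hmx
          · rw [hmx] at hyC'; exact hyC'
          · exact absurd (hmx ▸ hyC') hcase
        rcases (abs_eq (by norm_num : (0:ℝ) ≤ 1)).1 h1 with e | e <;>
          rcases le_total (2*ε*(gP P x i0)) y.2 with hdir | hdir
        · refine ⟨pieceSet i0 (gP P) ε 1 true true P, ?_, ⟨⟨hxP, ?_⟩, ?_⟩⟩
          · simp only [mem_iUnion, mem_range]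
            exact ⟨P, hPT, (true, true, true), rfl⟩
          · exact mem_vseg.2 ⟨e, (abs_le.1 hy2).1, (abs_le.1 hy2).2⟩
          · show (0:ℝ) ≤ lcf 0 (if true then -(2*ε) else 2*ε)
              (if true then 0 else if true then 1 else -1)
              (if true then if true then 1 else -1 else 0) i0 (gP P) (x, y)
            rw [lcf_apply]
            simp only [if_true]
            linarith
        · refine ⟨pieceSet i0 (gP P) ε 1 true false P, ?_, ⟨⟨hxP, ?_⟩, ?_⟩⟩
          · simp only [mem_iUnion, mem_range]
            exact ⟨P, hPT, (true, true, false), rfl⟩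
          · exact mem_vseg.2 ⟨e, (abs_le.1 hy2).1, (abs_le.1 hy2).2⟩
          · show (0:ℝ) ≤ lcf 0 (if false then -(2*ε) else 2*ε)
              (if true then 0 else if false then 1 else -1)
              (if true then if false then 1 else -1 else 0) i0 (gP P) (x, y)
            rw [lcf_apply]
            simp only [if_true, Bool.false_eq_true, if_false]
            linarith
        · refine ⟨pieceSet i0 (gP P) ε (-1) true true P, ?_, ⟨⟨hxP, ?_⟩, ?_⟩⟩
          · simp only [mem_iUnion, mem_range]
            exact ⟨P, hPT, (false, true, true), rfl⟩
          · exact mem_vseg.2 ⟨e, (abs_le.1 hy2).1, (abs_le.1 hy2).2⟩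
          · show (0:ℝ) ≤ lcf 0 (if true then -(2*ε) else 2*ε)
              (if true then 0 else if true then 1 else -1)
              (if true then if true then 1 else -1 else 0) i0 (gP P) (x, y)
            rw [lcf_apply]
            simp only [if_true]
            linarith
        · refine ⟨pieceSet i0 (gP P) ε (-1) true false P, ?_, ⟨⟨hxP, ?_⟩, ?_⟩⟩
          · simp only [mem_iUnion, mem_range]
            exact ⟨P, hPT, (false, true, false), rfl⟩
          · exact mem_vseg.2 ⟨e, (abs_le.1 hy2).1, (abs_le.1 hy2).2⟩
          · show (0:ℝ) ≤ lcf 0 (if false then -(2*ε) else 2*ε)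
              (if true then 0 else if false then 1 else -1)
              (if true then if false then 1 else -1 else 0) i0 (gP P) (x, y)
            rw [lcf_apply]
            simp only [if_true, Bool.false_eq_true, if_false]
            linarith
    · -- affine on each piece
      intro S hS
      simp only [mem_iUnion, mem_range] at hS
      obtain ⟨P, hPT, b, rfl⟩ := hS
      exact piece_eqOn hd (hgP P hPT) ht _
        (by rcases b.1 with _ | _ <;> simp) b.2.1 b.2.2
  · -- injectivity
    rintro ⟨x, y⟩ ⟨hxK, hyC⟩ ⟨x', y'⟩ ⟨hx'K, hy'C⟩ heq
    obtain ⟨ht1, ht2⟩ := ht x hxK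
    obtain ⟨ht1', ht2'⟩ := ht x' hx'K
    have e0 := congrFun heq (⟨0, by omega⟩ : Fin (d+1))
    have e1 := congrFun heq (⟨1, by omega⟩ : Fin (d+1))
    simp only [gmap] at e0 e1
    norm_num at e0 e1
    have hB : sideB (3/2 + ε * f (x, y).1 ⟨0, hd⟩) (x, y).2
        = sideB (3/2 + ε * f (x', y').1 ⟨0, hd⟩) (x', y').2 := Prod.ext e0 e1
    have hyCm : |y.1| ⊔ |y.2| = 1 := hyC
    have hy'Cm : |y'.1| ⊔ |y'.2| = 1 := hy'C
    obtain ⟨htt, hyy⟩ := sideB_inj ht1 ht2 ht1' ht2' hyCm hy'Cm hB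
    have hf0 : f x ⟨0, hd⟩ = f x' ⟨0, hd⟩ := by
      have := mul_left_cancel₀ (ne_of_gt hεpos) (by linarith : ε * f x ⟨0, hd⟩ = ε * f x' ⟨0, hd⟩)
      exact this
    have hfeq : f x = f x' := by
      funext j
      by_cases hj : (j : ℕ) = 0
      · have hj' : j = ⟨0, hd⟩ := Fin.ext hj
        rw [hj']; exact hf0
      · have e := congrFun heq (⟨(j : ℕ) + 1, by omega⟩ : Fin (d+1))
        simp only [gmap] at e
        simp only [if_neg (show ¬((j:ℕ) + 1 = 0) from by omega),
          if_neg (show ¬((j:ℕ) + 1 = 1) from by omega)] at e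
        have hjj : (⟨((⟨(j : ℕ) + 1, by omega⟩ : Fin (d+1)) : ℕ) - 1, by omega⟩ : Fin d) = j :=
          Fin.ext (by simp)
        rwa [hjj] at e
    exact Prod.ext (hinj hxK hx'K hfeq) hyy
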